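/- Let F be a field of characteristic 0, let V be an F-vector space with dim V = k, and let n be a positive integer with k² < n. Then End_{F[Aₙ]}(V^{⊗n}) = End_{F[Sₙ]}(V^{⊗n}): every F-linear endomorphism of V^{⊗n} that commutes with φ_σ for all even permutations σ ∈ Aₙ commutes with φ_σ for all σ ∈ Sₙ. -/

import Mathlib

open scoped TensorProduct


section Aux

variable {F V : Type*} [Field F] [AddCommGroup V] [Module F V] {k n : ℕ}

/-- Coordinate functional on the tensor power attached to a multi-index `g`. -/
noncomputable def auxD (b : Module.Basis (Fin k) F V) (g : Fin n → Fin k) :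
    (⨂[F] _ : Fin n, V) →ₗ[F] F :=
  PiTensorProduct.lift
    ((MultilinearMap.mkPiAlgebra F (Fin n) F).compLinearMap fun i => b.coord (g i))

theorem auxD_tprod (b : Module.Basis (Fin k) F V) (g : Fin n → Fin k) (v : Fin n → V) :
    auxD b g (PiTensorProduct.tprod F v) = ∏ i, b.repr (v i) (g i) := by
  simp [auxD, Module.Basis.coord_apply]

theorem auxD_tprod_basis (b : Module.Basis (Fin k) F V) (g f : Fin n → Fin k) :
    auxD b g (PiTensorProduct.tprod F fun i => b (f i)) = if f = g then 1 else 0 := by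
  rw [auxD_tprod]
  have h : ∀ i : Fin n, (b.repr (b (f i))) (g i) = if f i = g i then (1:F) else 0 := by
    intro i; simp [Module.Basis.repr_self, Finsupp.single_apply]
  simp only [h]
  rw [Finset.prod_boole]
  simp [funext_iff]

end Aux


/-- Let `F` be a field of characteristic `0`, `V` an `F`-vector space of
dimension `k`, and `n` a positive integer with `k² < n`.  Let `φ` be the (sign-free)
permutation action of `Sₙ` on `V^{⊗n}`.  Then the centralizer algebras coincide:
`End_{F[Aₙ]}(V^{⊗n}) = End_{F[Sₙ]}(V^{⊗n})`, i.e. every `F`-linear endomorphism of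
`V^{⊗n}` commuting with `φ_σ` for all even permutations `σ` commutes with `φ_σ`
for all `σ ∈ Sₙ`. -/
theorem stmt1 (F : Type*) [Field F] [CharZero F]
    (V : Type*) [AddCommGroup V] [Module F V] [FiniteDimensional F V]
    (k n : ℕ) (hk : Module.finrank F V = k) (hn : 0 < n) (hkn : k ^ 2 < n)
    (φ : Representation F (Equiv.Perm (Fin n)) (⨂[F] _ : Fin n, V))
    (hφ : ∀ (σ : Equiv.Perm (Fin n)) (v : Fin n → V),
      φ σ (PiTensorProduct.tprod F v) = PiTensorProduct.tprod F (fun i => v (σ⁻¹ i))) :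
    {L : (⨂[F] _ : Fin n, V) →ₗ[F] (⨂[F] _ : Fin n, V) |
        ∀ σ ∈ alternatingGroup (Fin n), L ∘ₗ φ σ = φ σ ∘ₗ L} =
      {L : (⨂[F] _ : Fin n, V) →ₗ[F] (⨂[F] _ : Fin n, V) |
        ∀ σ : Equiv.Perm (Fin n), L ∘ₗ φ σ = φ σ ∘ₗ L} := by
  ext L
  simp only [Set.mem_setOf_eq]
  refine ⟨fun hL => ?_, fun hL σ _ => hL σ⟩
  rcases Nat.eq_zero_or_pos k with hk0 | hkpos
  · -- degenerate case : V = 0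
    subst hk0
    have hV : Subsingleton V := by
      rw [← Module.finrank_zero_iff (R := F)]; exact hk
    have hT0 : ∀ x : (⨂[F] _ : Fin n, V), x = 0 := by
      intro x
      induction x using PiTensorProduct.induction_on with
      | smul_tprod r v =>
        have hv : v = fun _ => 0 := funext fun i => Subsingleton.elim _ _
        rw [hv, MultilinearMap.map_coord_zero (PiTensorProduct.tprod F) (⟨0, hn⟩ : Fin n) rfl,
          smul_zero]
      | add x y hx hy => rw [hx, hy, add_zero]
    have : Subsingleton (⨂[F] _ : Fin n, V) := ⟨fun a c => by rw [hT0 a, hT0 c]⟩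
    intro σ
    exact Subsingleton.elim _ _
  · -- main case
    have hk2 : 1 ≤ k ^ 2 := Nat.one_le_pow _ _ hkpos
    have hn2 : 2 ≤ n := by omega
    have hφmul : ∀ a c : Equiv.Perm (Fin n), φ a * φ c = φ (a * c) :=
      fun a c => (map_mul φ a c).symm
    have hL' : ∀ σ : Equiv.Perm (Fin n), Equiv.Perm.sign σ = 1 → L * φ σ = φ σ * L := by
      intro σ h
      simpa [Module.End.mul_eq_comp] using hL σ (Equiv.Perm.mem_alternatingGroup.mpr h)
    set i0 : Fin n := ⟨0, by omega⟩
    set i1 : Fin n := ⟨1, by omega⟩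
    have hi01 : i0 ≠ i1 := by simp [i0, i1, Fin.ext_iff]
    set τ : Equiv.Perm (Fin n) := Equiv.swap i0 i1 with hτ
    have hτsign : Equiv.Perm.sign τ = -1 := Equiv.Perm.sign_swap hi01
    have hτ2 : τ * τ = 1 := by rw [hτ]; exact Equiv.swap_mul_self i0 i1
    have hττ : φ τ * φ τ = 1 := by rw [hφmul, hτ2, map_one]
    set K : (⨂[F] _ : Fin n, V) →ₗ[F] (⨂[F] _ : Fin n, V) := φ τ * L * φ τ - L with hK
    have hKeven : ∀ σ : Equiv.Perm (Fin n), Equiv.Perm.sign σ = 1 → φ σ * K = K * φ σ := by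
      intro σ hσ
      have h1 : Equiv.Perm.sign (τ * σ * τ) = 1 := by simp [map_mul, hτsign, hσ]
      have s1 : φ σ * φ τ = φ τ * φ (τ * σ * τ) := by
        rw [hφmul, hφmul]
        congr 1
        rw [← mul_assoc, ← mul_assoc, hτ2, one_mul]
      have s2 : φ (τ * σ * τ) * φ τ = φ τ * φ σ := by
        rw [hφmul, hφmul]
        congr 1
        rw [mul_assoc, hτ2, mul_one]
      have main : φ σ * (φ τ * L * φ τ) = (φ τ * L * φ τ) * φ σ := by
        calc φ σ * (φ τ * L * φ τ)
            = (φ σ * φ τ) * L * φ τ := by noncomm_ring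
          _ = (φ τ * φ (τ * σ * τ)) * L * φ τ := by rw [s1]
          _ = φ τ * (φ (τ * σ * τ) * L) * φ τ := by noncomm_ring
          _ = φ τ * (L * φ (τ * σ * τ)) * φ τ := by rw [hL' _ h1]
          _ = φ τ * L * (φ (τ * σ * τ) * φ τ) := by noncomm_ring
          _ = φ τ * L * (φ τ * φ σ) := by rw [s2]
          _ = (φ τ * L * φ τ) * φ σ := by noncomm_ring
      rw [hK, mul_sub, sub_mul, main, hL' σ hσ]
    have hKτ : φ τ * K = -(K * φ τ) := by
      have h1 : φ τ * K = L * φ τ - φ τ * L := by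
        rw [hK, mul_sub]
        congr 1
        calc φ τ * (φ τ * L * φ τ) = (φ τ * φ τ) * (L * φ τ) := by noncomm_ring
          _ = L * φ τ := by rw [hττ, one_mul]
      have h2 : K * φ τ = φ τ * L - L * φ τ := by
        rw [hK, sub_mul]
        congr 1
        calc φ τ * L * φ τ * φ τ = (φ τ * L) * (φ τ * φ τ) := by noncomm_ring
          _ = φ τ * L := by rw [hττ, mul_one]
      rw [h1, h2]; noncomm_ring
    have hKswap : ∀ i j : Fin n, i ≠ j →
        φ (Equiv.swap i j) * K = -(K * φ (Equiv.swap i j)) := by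
      intro i j hij
      set σ := Equiv.swap i j with hσdef
      have hα : Equiv.Perm.sign (σ * τ) = 1 := by
        simp [map_mul, hτsign, hσdef, Equiv.Perm.sign_swap hij]
      have s3 : φ σ = φ (σ * τ) * φ τ := by
        rw [hφmul, mul_assoc, hτ2, mul_one]
      calc φ σ * K = φ (σ * τ) * (φ τ * K) := by rw [s3]; noncomm_ring
        _ = φ (σ * τ) * -(K * φ τ) := by rw [hKτ]
        _ = -((φ (σ * τ) * K) * φ τ) := by
            have hmn := mul_neg (φ (σ * τ)) (K * φ τ)
            rw [hmn, ← mul_assoc]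
        _ = -((K * φ (σ * τ)) * φ τ) := by rw [hKeven _ hα]
        _ = -(K * (φ (σ * τ) * φ τ)) := by rw [mul_assoc]
        _ = -(K * φ σ) := by rw [← s3]
    -- choose a basis
    set b : Module.Basis (Fin k) F V := (Module.finBasis F V).reindex (finCongr hk) with hb
    have hDsym : ∀ (σ : Equiv.Perm (Fin n)) (g : Fin n → Fin k) (x : ⨂[F] _ : Fin n, V),
        auxD b g (φ σ x) = auxD b (fun i => g (σ i)) x := by
      intro σ g x
      have heq : (auxD b g) ∘ₗ (φ σ) = auxD b (fun i => g (σ i)) := by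
        apply PiTensorProduct.ext
        apply MultilinearMap.ext
        intro v
        simp only [LinearMap.compMultilinearMap_apply, LinearMap.comp_apply, hφ, auxD_tprod]
        exact (Fintype.prod_equiv σ (fun i => (b.repr (v i)) (g (σ i)))
          (fun i => (b.repr (v (σ⁻¹ i))) (g i)) (fun i => by simp)).symm
      exact LinearMap.congr_fun heq x
    -- extensionality on basis tensors
    have key_ext : ∀ P Q : (⨂[F] _ : Fin n, V) →ₗ[F] (⨂[F] _ : Fin n, V),
        (∀ f : Fin n → Fin k,
          P (PiTensorProduct.tprod F fun i => b (f i)) =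
            Q (PiTensorProduct.tprod F fun i => b (f i))) → P = Q := by
      intro P Q h
      apply PiTensorProduct.ext
      apply Module.Basis.ext_multilinear (fun _ => b)
      intro v
      simpa using h v
    -- reconstruction operator
    set recon : (⨂[F] _ : Fin n, V) →ₗ[F] (⨂[F] _ : Fin n, V) :=
      ∑ g : Fin n → Fin k, (auxD b g).smulRight (PiTensorProduct.tprod F fun i => b (g i))
      with hrecondef
    have hrecon : recon = LinearMap.id := by
      apply key_ext
      intro f
      simp only [hrecondef, LinearMap.sum_apply, LinearMap.smulRight_apply, LinearMap.id_apply,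
        auxD_tprod_basis, ite_smul, one_smul, zero_smul]
      rw [Finset.sum_ite_eq]
      simp
    -- K vanishes
    have hK0 : K = 0 := by
      apply key_ext
      intro f
      set x : (⨂[F] _ : Fin n, V) := K (PiTensorProduct.tprod F fun i => b (f i)) with hx
      have hDx : ∀ g : Fin n → Fin k, auxD b g x = 0 := by
        intro g
        obtain ⟨i, j, hij, hfg⟩ := Fintype.exists_ne_map_eq_of_card_lt
          (fun i : Fin n => (f i, g i)) (by simpa [pow_two] using hkn)
        have hfi : f i = f j := congrArg Prod.fst hfg
        have hgi : g i = g j := congrArg Prod.snd hfg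
        set σ := Equiv.swap i j with hσdef
        have hfσ : ∀ y : Fin n, f (σ y) = f y := by
          intro y
          rcases eq_or_ne y i with rfl | hyi
          · rw [hσdef, Equiv.swap_apply_left, hfi]
          rcases eq_or_ne y j with rfl | hyj
          · rw [hσdef, Equiv.swap_apply_right, hfi]
          · rw [hσdef, Equiv.swap_apply_of_ne_of_ne hyi hyj]
        have hgσ : ∀ y : Fin n, g (σ y) = g y := by
          intro y
          rcases eq_or_ne y i with rfl | hyi
          · rw [hσdef, Equiv.swap_apply_left, hgi]
          rcases eq_or_ne y j with rfl | hyj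
          · rw [hσdef, Equiv.swap_apply_right, hgi]
          · rw [hσdef, Equiv.swap_apply_of_ne_of_ne hyi hyj]
        have hσinv : σ⁻¹ = σ := by rw [hσdef]; exact Equiv.swap_inv i j
        have hfix : φ σ (PiTensorProduct.tprod F fun i => b (f i)) =
            PiTensorProduct.tprod F fun i => b (f i) := by
          rw [hφ]
          congr 1
          funext y
          rw [hσinv, hfσ]
        have h1 : φ σ x = -x := by
          have h := LinearMap.congr_fun (hKswap i j hij)
            (PiTensorProduct.tprod F fun i => b (f i))
          simp only [Module.End.mul_apply, LinearMap.neg_apply] at h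
          rw [hfix] at h
          exact h
        have h2 : auxD b g (φ σ x) = auxD b g x := by
          rw [hDsym]
          have hgg : (fun i => g (σ i)) = g := funext hgσ
          rw [hgg]
        rw [h1, map_neg] at h2
        have h3 : (2 : F) * auxD b g x = 0 := by rw [two_mul]; linear_combination -h2
        rcases mul_eq_zero.mp h3 with h | h
        · exact absurd h two_ne_zero
        · exact h
      have hxr : x = recon x := by rw [hrecon]; rfl
      rw [hxr, hrecondef]
      simp only [LinearMap.sum_apply, LinearMap.smulRight_apply, hDx, zero_smul,
        Finset.sum_const_zero, LinearMap.zero_apply]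
    -- conclude
    have hcommτ : L * φ τ = φ τ * L := by
      have hKe : φ τ * L * φ τ = L := sub_eq_zero.mp (hK ▸ hK0)
      calc L * φ τ = (φ τ * φ τ) * (L * φ τ) := by rw [hττ, one_mul]
        _ = φ τ * (φ τ * L * φ τ) := by noncomm_ring
        _ = φ τ * L := by rw [hKe]
    intro σ
    have goal_mul : L * φ σ = φ σ * L := by
      rcases Int.units_eq_one_or (Equiv.Perm.sign σ) with hs | hs
      · exact hL' σ hs
      · have hα : Equiv.Perm.sign (σ * τ) = 1 := by simp [map_mul, hτsign, hs]
        have s3 : φ σ = φ (σ * τ) * φ τ := by rw [hφmul, mul_assoc, hτ2, mul_one]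
        calc L * φ σ = L * (φ (σ * τ) * φ τ) := by rw [s3]
          _ = (L * φ (σ * τ)) * φ τ := by noncomm_ring
          _ = (φ (σ * τ) * L) * φ τ := by rw [hL' _ hα]
          _ = φ (σ * τ) * (L * φ τ) := by noncomm_ring
          _ = φ (σ * τ) * (φ τ * L) := by rw [hcommτ]
          _ = (φ (σ * τ) * φ τ) * L := by noncomm_ring
          _ = φ σ * L := by rw [← s3]
    simpa [Module.End.mul_eq_comp] using goal_mul
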